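/- There exists a unique sequence of polynomials C_n(τ) over ℚ satisfying C_0(τ) = τ²/3 − 1/3 and, for n ≥ 1, C_n(τ) + τ C'_n(τ) − C''_n(τ) = τ(τ² − 2) C_{n−1}(τ) − (2τ² − 1) C'_{n−1}(τ) + τ C''_{n−1}(τ). -/

import Mathlib

open Polynomial

private noncomputable def Lp (p : Polynomial ℚ) : Polynomial ℚ :=
  p + X * derivative p - derivative (derivative p)

private lemma Lp_sub (p q : Polynomial ℚ) : Lp (p - q) = Lp p - Lp q := by
  simp only [Lp, derivative_sub, mul_sub]; ring

private lemma coeff_Lp (p : Polynomial ℚ) (d : ℕ) (h : p.natDegree ≤ d) :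
    (Lp p).coeff d = (d + 1 : ℚ) * p.coeff d := by
  have h2 : p.coeff (d + 2) = 0 := coeff_eq_zero_of_natDegree_lt (by omega)
  have hdd : (derivative (derivative p)).coeff d = 0 := by
    rw [coeff_derivative, coeff_derivative, h2]; ring
  cases d with
  | zero =>
    simp only [Lp, coeff_sub, coeff_add, mul_coeff_zero, coeff_X_zero, zero_mul, hdd]
    ring
  | succ n =>
    simp only [Lp, coeff_sub, coeff_add, coeff_X_mul, coeff_derivative, hdd]
    push_cast
    ring

private lemma natDegree_Lp_le (p : Polynomial ℚ) : (Lp p).natDegree ≤ p.natDegree := by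
  have h1 : (X * derivative p).natDegree ≤ p.natDegree := by
    by_cases hp : derivative p = 0
    · simp [hp]
    · have h0 : p.natDegree ≠ 0 := by
        intro h0
        exact hp (by rw [eq_C_of_natDegree_eq_zero h0]; simp)
      have := natDegree_derivative_le p
      refine le_trans (natDegree_mul_le) ?_
      simp only [natDegree_X]
      omega
  have h2 : (derivative (derivative p)).natDegree ≤ p.natDegree :=
    le_trans (natDegree_derivative_le _)
      (le_trans (Nat.sub_le_sub_right (natDegree_derivative_le p) 1) (by omega))
  exact le_trans (natDegree_sub_le _ _)
    (max_le (le_trans (natDegree_add_le _ _) (max_le le_rfl h1)) h2)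

private lemma Lp_injective : Function.Injective Lp := by
  intro p q h
  by_contra hne
  have hpq : p - q ≠ 0 := sub_ne_zero.mpr hne
  have h0 : Lp (p - q) = 0 := by rw [Lp_sub, h, sub_self]
  have := coeff_Lp (p - q) (p - q).natDegree le_rfl
  rw [h0, coeff_zero] at this
  have hl : (p - q).coeff (p - q).natDegree ≠ 0 := by
    simpa using leadingCoeff_ne_zero.mpr hpq
  have : ((p - q).natDegree + 1 : ℚ) ≠ 0 := by positivity
  exact hl (by
    field_simp at *
    exact (mul_eq_zero.mp this.symm).resolve_right (by positivity))

private lemma Lp_surjective : ∀ q : Polynomial ℚ, ∃ p, Lp p = q := by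
  suffices h : ∀ n : ℕ, ∀ q : Polynomial ℚ, q.natDegree ≤ n → ∃ p, Lp p = q by
    intro q; exact h q.natDegree q le_rfl
  intro n
  induction n using Nat.strong_induction_on with
  | _ n ih =>
    intro q hq
    by_cases hq0 : q = 0
    · exact ⟨0, by simp [Lp, hq0]⟩
    set d := q.natDegree with hd
    set a := q.coeff d with ha
    set p₀ : Polynomial ℚ := C (a / (d + 1)) * X ^ d with hp₀
    have hdeg₀ : p₀.natDegree ≤ d := by
      refine le_trans natDegree_mul_le ?_
      simp
    have hcoeff₀ : p₀.coeff d = a / (d + 1) := by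
      rw [hp₀, coeff_C_mul, coeff_X_pow, if_pos rfl, mul_one]
    have hd1 : (d + 1 : ℚ) ≠ 0 := by positivity
    have hLc : (Lp p₀).coeff d = a := by
      rw [coeff_Lp p₀ d hdeg₀, hcoeff₀, mul_div_cancel₀ _ hd1]
    set r : Polynomial ℚ := q - Lp p₀ with hr
    have hrc : r.coeff d = 0 := by rw [hr, coeff_sub, hLc, ha, sub_self]
    have hrdeg : r.natDegree ≤ d := by
      refine le_trans (natDegree_sub_le _ _) (max_le le_rfl ?_)
      exact le_trans (natDegree_Lp_le p₀) hdeg₀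
    by_cases hr0 : r = 0
    · refine ⟨p₀, ?_⟩
      exact (sub_eq_zero.mp hr0).symm
    · have hrlt : r.natDegree < d := by
        rcases lt_or_eq_of_le hrdeg with h | h
        · exact h
        · refine absurd ?_ (leadingCoeff_ne_zero.mpr hr0)
          rw [leadingCoeff, h, hrc]
      obtain ⟨p₁, hp₁⟩ := ih r.natDegree (by omega) r le_rfl
      refine ⟨p₀ + p₁, ?_⟩
      have : Lp (p₀ + p₁) = Lp p₀ + Lp p₁ := by
        simp only [Lp, derivative_add, mul_add]; ring
      rw [this, hp₁, hr]; ring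

theorem C_exists_unique :
    ∃! Cs : ℕ → Polynomial ℚ,
      Cs 0 = C (1 / 3) * X ^ 2 - C (1 / 3) ∧
      ∀ n : ℕ,
        Cs (n + 1) + X * derivative (Cs (n + 1)) - derivative (derivative (Cs (n + 1))) =
          X * (X ^ 2 - C 2) * Cs n - (C 2 * X ^ 2 - 1) * derivative (Cs n) +
            X * derivative (derivative (Cs n)) := by
  classical
  set RHS : Polynomial ℚ → Polynomial ℚ := fun p =>
    X * (X ^ 2 - C 2) * p - (C 2 * X ^ 2 - 1) * derivative p +
      X * derivative (derivative p) with hRHS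
  set F : Polynomial ℚ → Polynomial ℚ := fun q => (Lp_surjective q).choose with hF
  have hFspec : ∀ q, Lp (F q) = q := fun q => (Lp_surjective q).choose_spec
  set Cs : ℕ → Polynomial ℚ :=
    fun n => Nat.rec (C (1 / 3) * X ^ 2 - C (1 / 3)) (fun _ p => F (RHS p)) n with hCs
  refine ⟨Cs, ⟨rfl, fun n => ?_⟩, fun Ds ⟨hD0, hDrec⟩ => ?_⟩
  · have : Cs (n + 1) = F (RHS (Cs n)) := rfl
    rw [this]
    exact hFspec (RHS (Cs n))
  · funext n
    induction n with
    | zero => exact hD0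
    | succ n ihn =>
      apply Lp_injective
      show Lp (Ds (n + 1)) = Lp (F (RHS (Cs n)))
      rw [hFspec]
      calc Lp (Ds (n + 1)) = RHS (Ds n) := hDrec n
        _ = RHS (Cs n) := by rw [ihn]
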